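/- Lower estimate for the distance between levels of generalized Margulis domains, part (ii) (Proposition 4.6(ii)): Let (X,σ) be a δ-hyperbolic GCB-space which is P0-packed at scale r0, let 0 < ε1 ≤ ε2 with ε2 ≤ r0, let g be a non-elliptic σ-isometry of X such that ℳ_{ε1}(g) ≠ ∅, and let x ∈ X be a point not belonging to ℳ_{ε2}(g). Then d(x, ℳ_{ε1}(g)) > ( log(2/ε1 − 1) / (2·log(1 + P0)) )·ε2 − 1/2. -/

import Mathlib

open Metric Filter

/-- Four-points condition for `δ`-hyperbolicity. -/
def IsDeltaHyperbolic (X : Type*) [MetricSpace X] (δ : ℝ) : Prop :=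
  ∀ x y z w : X,
    dist x y + dist z w ≤ max (dist x z + dist y w) (dist x w + dist y z) + 2 * δ

/-- `X` is `P₀`-packed at scale `r₀`: any subset of a closed ball of radius `3r₀` whose
points are pairwise at distance `> 2r₀` has cardinality at most `P₀`. -/
def IsPacked (X : Type*) [MetricSpace X] (P₀ r₀ : ℝ) : Prop :=
  ∀ x : X, ∀ S : Finset X, (↑S ⊆ closedBall x (3 * r₀)) →
    (∀ a ∈ S, ∀ b ∈ S, a ≠ b → 2 * r₀ < dist a b) → (S.card : ℝ) ≤ P₀

/-- A geodesically complete, convex, consistent, reversible geodesic bicombing on `X`.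
Together with completeness of `X` this is the notion of GCB-space. -/
structure IsGCB {X : Type*} [MetricSpace X] (σ : X → X → ℝ → X) : Prop where
  source : ∀ x y : X, σ x y 0 = x
  target : ∀ x y : X, σ x y 1 = y
  geodesic : ∀ x y : X, ∀ t ∈ Set.Icc (0:ℝ) 1, ∀ t' ∈ Set.Icc (0:ℝ) 1,
    dist (σ x y t) (σ x y t') = |t - t'| * dist x y
  convex : ∀ x y x' y' : X,
    ConvexOn ℝ (Set.Icc (0:ℝ) 1) fun t => dist (σ x y t) (σ x' y' t)
  consistent : ∀ x y : X, ∀ s t l : ℝ, 0 ≤ s → s ≤ t → t ≤ 1 → l ∈ Set.Icc (0:ℝ) 1 →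
    σ (σ x y s) (σ x y t) l = σ x y ((1 - l) * s + l * t)
  reversible : ∀ x y : X, ∀ t ∈ Set.Icc (0:ℝ) 1, σ x y t = σ y x (1 - t)
  geodComplete : ∀ x y : X, ∃ γ : ℝ → X, Isometry γ ∧
    (∀ s t : ℝ, s ≤ t → ∀ l ∈ Set.Icc (0:ℝ) 1, σ (γ s) (γ t) l = γ (s + l * (t - s))) ∧
    (∀ t ∈ Set.Icc (0:ℝ) 1, σ x y t = γ (t * dist x y))

/-- `g` is a `σ`-isometry: a surjective isometry preserving the bicombing `σ`. -/
def IsSigmaIsometry {X : Type*} [MetricSpace X] (σ : X → X → ℝ → X) (g : X ≃ᵢ X) : Prop :=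
  ∀ x y : X, ∀ t ∈ Set.Icc (0:ℝ) 1, g (σ x y t) = σ (g x) (g y) t

/-- A group of isometries is discrete if for every `x` and `R` only finitely many of its
elements displace `x` at most `R`. -/
def IsDiscreteSubgroup {X : Type*} [MetricSpace X] (Γ : Subgroup (X ≃ᵢ X)) : Prop :=
  ∀ x : X, ∀ R : ℝ, {g : X ≃ᵢ X | g ∈ Γ ∧ dist x (g x) ≤ R}.Finite

/-- A group is virtually nilpotent if it has a nilpotent subgroup of finite index. -/
def IsVirtuallyNilpotent (G : Type*) [Group G] : Prop :=
  ∃ H : Subgroup G, H.FiniteIndex ∧ Group.IsNilpotent H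

/-- `Γ` is non-elementary: it contains two elements generating a subgroup that is not
virtually nilpotent. -/
def IsNonElementary {X : Type*} [MetricSpace X] (Γ : Subgroup (X ≃ᵢ X)) : Prop :=
  ∃ a b : X ≃ᵢ X, a ∈ Γ ∧ b ∈ Γ ∧
    ¬ IsVirtuallyNilpotent ↥(Subgroup.closure ({a, b} : Set (X ≃ᵢ X)))

/-- An isometry is non-elliptic if its orbits are unbounded. -/
def IsNonElliptic {X : Type*} [MetricSpace X] (g : X ≃ᵢ X) : Prop :=
  ∀ x : X, ¬ Bornology.IsBounded (Set.range fun n : ℤ => (g ^ n) x)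

/-- The `r`-almost stabilizer `Γ_r(x)`, generated by the elements of `Γ` displacing `x`
at most `r`. -/
def almostStabilizer {X : Type*} [MetricSpace X] (Γ : Subgroup (X ≃ᵢ X)) (r : ℝ) (x : X) :
    Subgroup (X ≃ᵢ X) :=
  Subgroup.closure {g : X ≃ᵢ X | g ∈ Γ ∧ dist x (g x) ≤ r}

/-- The nilpotence radius of `Γ` at `x`. -/
noncomputable def nilrad {X : Type*} [MetricSpace X] (Γ : Subgroup (X ≃ᵢ X)) (x : X) : ℝ :=
  sSup {r : ℝ | 0 ≤ r ∧ IsVirtuallyNilpotent ↥(almostStabilizer Γ r x)}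

/-- The Margulis domain `M_ε(g)`. -/
def margulisDomain {X : Type*} [MetricSpace X] (g : X ≃ᵢ X) (ε : ℝ) : Set X :=
  {x : X | dist x (g x) ≤ ε}

/-- The generalized Margulis domain `ℳ_ε(g) = ⋃_{i ≠ 0} M_ε(gⁱ)`. -/
def genMargulisDomain {X : Type*} [MetricSpace X] (g : X ≃ᵢ X) (ε : ℝ) : Set X :=
  ⋃ i ∈ {i : ℤ | i ≠ 0}, margulisDomain (g ^ i) ε

/-- `f` parameterizes a geodesic segment from `x` to `y` on `[0, dist x y]`. -/
def IsGeodesicFrom {X : Type*} [MetricSpace X] (f : ℝ → X) (x y : X) : Prop :=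
  f 0 = x ∧ f (dist x y) = y ∧
    ∀ s ∈ Set.Icc 0 (dist x y), ∀ t ∈ Set.Icc 0 (dist x y), dist (f s) (f t) = |s - t|

/-- `X` is a geodesic space. -/
def IsGeodesicSpace (X : Type*) [MetricSpace X] : Prop :=
  ∀ x y : X, ∃ f : ℝ → X, IsGeodesicFrom f x y

/-- `C` is `lam`-quasiconvex: any two of its points are joined by a geodesic contained in
the closed `lam`-neighbourhood of `C`. -/
def IsQuasiconvex {X : Type*} [MetricSpace X] (lam : ℝ) (C : Set X) : Prop :=
  ∀ x ∈ C, ∀ y ∈ C, ∃ f : ℝ → X, IsGeodesicFrom f x y ∧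
    ∀ t ∈ Set.Icc 0 (dist x y), infDist (f t) C ≤ lam

/-- `C` is a convex subset: any two of its points are joined by a geodesic inside `C`. -/
def IsConvexSubset {X : Type*} [MetricSpace X] (C : Set X) : Prop :=
  ∀ x ∈ C, ∀ y ∈ C, ∃ f : ℝ → X, IsGeodesicFrom f x y ∧
    ∀ t ∈ Set.Icc 0 (dist x y), f t ∈ C

/-- Arc-length concatenation of three paths, of respective lengths `d₁`, `d₂` and the rest. -/
noncomputable def concatPath {X : Type*} (d₁ d₂ : ℝ) (f₁ f₂ f₃ : ℝ → X) : ℝ → X :=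
  fun t => if t ≤ d₁ then f₁ t else if t ≤ d₁ + d₂ then f₂ (t - d₁) else f₃ (t - d₁ - d₂)

-- ### Lemma: scale reduction of packing
lemma packed_small {X : Type*} [MetricSpace X] {σ : X → X → ℝ → X} {P₀ r₀ : ℝ}
    (hGCB : IsGCB σ) (hpack : IsPacked X P₀ r₀) {r : ℝ} (hr : 0 < r) (hrr : r ≤ r₀) :
    IsPacked X P₀ r := by
  classical
  intro x S hS hsep
  choose γ hiso hline hseg using fun y : X => hGCB.geodComplete x y
  -- γ : X → ℝ → X, for each y a line through x and y
  have hγ0 : ∀ y : X, γ y 0 = x := by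
    intro y
    have := hseg y 0 ⟨le_refl 0, zero_le_one⟩
    rw [hGCB.source, zero_mul] at this
    exact this.symm
  have hγd : ∀ y : X, γ y (dist x y) = y := by
    intro y
    have := hseg y 1 ⟨zero_le_one, le_refl 1⟩
    rw [hGCB.target, one_mul] at this
    exact this.symm
  set lam := r₀ / r with hlam
  have hr₀ : 0 < r₀ := lt_of_lt_of_le hr hrr
  have hlam1 : 1 ≤ lam := (one_le_div hr).2 hrr
  have hlampos : 0 < lam := lt_of_lt_of_le one_pos hlam1
  set Φ : X → X := fun y => γ y (lam * dist x y) with hΦ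
  -- σ from x to Φ y parameterizes the ray
  have hsigma : ∀ (y : X) (l : ℝ), l ∈ Set.Icc (0:ℝ) 1 →
      σ x (Φ y) l = γ y (l * (lam * dist x y)) := by
    intro y l hl
    have h0T : (0:ℝ) ≤ lam * dist x y := by positivity
    have := hline y 0 (lam * dist x y) h0T l hl
    rw [hγ0 y] at this
    rw [hΦ]
    simp only [this, zero_add, sub_zero]
  have hxΦ : ∀ y : X, dist x (Φ y) = lam * dist x y := by
    intro y
    have : dist (γ y 0) (γ y (lam * dist x y)) = |0 - lam * dist x y| := by
      rw [(hiso y).dist_eq, Real.dist_eq]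
    rw [hγ0 y] at this
    rw [hΦ]
    simp only at this ⊢
    rw [this, zero_sub, abs_neg, abs_of_nonneg (by positivity)]
  -- key expansion estimate
  have key : ∀ y z : X, lam * dist y z ≤ dist (Φ y) (Φ z) := by
    intro y z
    have hconv := hGCB.convex x (Φ y) x (Φ z)
    set f : ℝ → ℝ := fun t => dist (σ x (Φ y) t) (σ x (Φ z) t) with hf
    have hf0 : f 0 = 0 := by simp [hf, hGCB.source]
    have hf1 : f 1 = dist (Φ y) (Φ z) := by simp [hf, hGCB.target]
    have hmem : (1/lam : ℝ) ∈ Set.Icc (0:ℝ) 1 := by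
      constructor
      · positivity
      · rw [div_le_one hlampos]; linarith
    have hfl : f (1/lam) = dist y z := by
      rw [hf]
      simp only
      rw [hsigma y _ hmem, hsigma z _ hmem]
      have e1 : (1/lam) * (lam * dist x y) = dist x y := by field_simp
      have e2 : (1/lam) * (lam * dist x z) = dist x z := by field_simp
      rw [e1, e2, hγd y, hγd z]
    have h01 : (0:ℝ) ∈ Set.Icc (0:ℝ) 1 := by constructor <;> norm_num
    have h11 : (1:ℝ) ∈ Set.Icc (0:ℝ) 1 := by constructor <;> norm_num
    have ha : (0:ℝ) ≤ 1 - 1/lam := by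
      rw [sub_nonneg, div_le_one hlampos]; linarith
    have hb : (0:ℝ) ≤ 1/lam := by positivity
    have hab : (1 - 1/lam) + 1/lam = 1 := by ring
    have hcomb := hconv.2 h01 h11 ha hb hab
    simp only [smul_eq_mul] at hcomb
    have harg : (1 - 1/lam) * 0 + (1/lam) * 1 = 1/lam := by ring
    rw [harg] at hcomb
    rw [hf0, hfl, hf1] at hcomb
    have : dist y z ≤ (1/lam) * dist (Φ y) (Φ z) := by linarith
    calc lam * dist y z ≤ lam * ((1/lam) * dist (Φ y) (Φ z)) := by
          apply mul_le_mul_of_nonneg_left this hlampos.le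
      _ = dist (Φ y) (Φ z) := by field_simp
  -- image finset
  have hinj : Set.InjOn Φ ↑S := by
    intro a ha b hb hab
    by_contra hne
    have h1 := hsep a ha b hb hne
    have h2 := key a b
    rw [hab] at h2
    simp only [dist_self] at h2
    nlinarith
  have himg : ((S.image Φ : Finset X) : Set X) ⊆ closedBall x (3 * r₀) := by
    intro z hz
    simp only [Finset.coe_image, Set.mem_image, Finset.mem_coe] at hz
    obtain ⟨y, hy, rfl⟩ := hz
    rw [mem_closedBall, dist_comm, hxΦ y]
    have : dist x y ≤ 3 * r := by
      have := hS hy; rw [mem_closedBall, dist_comm] at this; exact this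
    calc lam * dist x y ≤ lam * (3 * r) := by
          apply mul_le_mul_of_nonneg_left this hlampos.le
      _ = 3 * r₀ := by rw [hlam]; field_simp
  have hsep' : ∀ a ∈ S.image Φ, ∀ b ∈ S.image Φ, a ≠ b → 2 * r₀ < dist a b := by
    intro a ha b hb hab
    simp only [Finset.mem_image] at ha hb
    obtain ⟨ya, hya, rfl⟩ := ha
    obtain ⟨yb, hyb, rfl⟩ := hb
    have hyne : ya ≠ yb := by rintro rfl; exact hab rfl
    have h1 := hsep ya hya yb hyb hyne
    have h2 := key ya yb
    calc 2 * r₀ = lam * (2 * r) := by rw [hlam]; field_simp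
      _ < lam * dist ya yb := by apply mul_lt_mul_of_pos_left h1 hlampos
      _ ≤ dist (Φ ya) (Φ yb) := h2
  have := hpack x (S.image Φ) himg hsep'
  rwa [Finset.card_image_of_injOn hinj] at this

-- ### Lemma: counting separated points in balls
lemma counting {X : Type*} [MetricSpace X] {σ : X → X → ℝ → X} {P₀ r₀ : ℝ}
    (hGCB : IsGCB σ) (hpack : IsPacked X P₀ r₀) (hP0 : 0 ≤ P₀)
    {r : ℝ} (hr : 0 < r) (hrr : r ≤ r₀) :
    ∀ n : ℕ, ∀ (c : X) (S : Finset X), (↑S ⊆ closedBall c (((n:ℝ)+3)*r)) →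
      (∀ a ∈ S, ∀ b ∈ S, a ≠ b → 2 * r < dist a b) → (S.card : ℝ) ≤ P₀ ^ (n+1) := by
  classical
  have hpr := packed_small hGCB hpack hr hrr
  intro n
  induction n with
  | zero =>
    intro c S hS hsep
    rw [pow_one]
    apply hpr c S _ hsep
    convert hS using 2
    push_cast; ring
  | succ n ih =>
    intro c S hS hsep
    -- projection map
    set p : X → X := fun y =>
      if dist c y ≤ ((n:ℝ)+3)*r then y else σ c y ((((n:ℝ)+3)*r)/dist c y) with hp
    have hp1 : ∀ y ∈ S, dist c (p y) ≤ ((n:ℝ)+3)*r ∧ dist (p y) y ≤ r := by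
      intro y hy
      by_cases h : dist c y ≤ ((n:ℝ)+3)*r
      · rw [hp]; simp only [if_pos h, dist_self]
        exact ⟨h, hr.le⟩
      · push_neg at h
        have hd0 : 0 < dist c y := lt_of_le_of_lt (by positivity) h
        set t : ℝ := (((n:ℝ)+3)*r)/dist c y with ht
        have ht0 : 0 ≤ t := by positivity
        have ht1 : t ≤ 1 := by rw [ht, div_le_one hd0]; linarith
        have htm : t ∈ Set.Icc (0:ℝ) 1 := ⟨ht0, ht1⟩
        have h0m : (0:ℝ) ∈ Set.Icc (0:ℝ) 1 := ⟨le_refl 0, zero_le_one⟩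
        have h1m : (1:ℝ) ∈ Set.Icc (0:ℝ) 1 := ⟨zero_le_one, le_refl 1⟩
        have hpy : p y = σ c y t := by rw [hp]; simp only [if_neg (not_le.2 h)]; rfl
        have hdy : dist c y ≤ ((n:ℝ)+1+3)*r := by
          have := hS hy; rw [mem_closedBall, dist_comm] at this
          push_cast at this ⊢; linarith
        constructor
        · rw [hpy]
          have := hGCB.geodesic c y 0 h0m t htm
          rw [hGCB.source] at this
          rw [this, abs_of_nonpos (by linarith), neg_sub, sub_zero, ht]
          rw [div_mul_eq_mul_div, mul_div_assoc, div_self hd0.ne', mul_one]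
        · rw [hpy]
          have := hGCB.geodesic c y t htm 1 h1m
          rw [hGCB.target] at this
          rw [this, abs_of_nonpos (by linarith), neg_sub]
          have : (1 - t) * dist c y = dist c y - ((n:ℝ)+3)*r := by
            rw [ht]; field_simp
          rw [this]; linarith
    -- maximal separated subset of the projections
    set S' : Finset X := S.image p with hS'
    have hS'ball : ∀ z ∈ S', dist c z ≤ ((n:ℝ)+3)*r := by
      intro z hz
      rw [hS', Finset.mem_image] at hz
      obtain ⟨y, hy, rfl⟩ := hz
      exact (hp1 y hy).1
    obtain ⟨T, hTmem, hTmax⟩ := Finset.exists_max_image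
      ((S'.powerset).filter (fun T => ∀ a ∈ T, ∀ b ∈ T, a ≠ b → 2*r < dist a b))
      Finset.card ⟨∅, by simp⟩
    rw [Finset.mem_filter, Finset.mem_powerset] at hTmem
    obtain ⟨hTsub, hTsep⟩ := hTmem
    have hnear : ∀ z ∈ S', ∃ t ∈ T, dist z t ≤ 2*r := by
      intro z hz
      by_contra hcon
      push_neg at hcon
      have hzT : z ∉ T := by
        intro h
        have := hcon z h
        simp only [dist_self] at this
        linarith
      have hins : insert z T ∈ (S'.powerset).filter
          (fun T => ∀ a ∈ T, ∀ b ∈ T, a ≠ b → 2*r < dist a b) := by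
        rw [Finset.mem_filter, Finset.mem_powerset]
        refine ⟨Finset.insert_subset hz hTsub, ?_⟩
        intro a ha b hb hab
        rcases Finset.mem_insert.1 ha with rfl | ha'
        · rcases Finset.mem_insert.1 hb with rfl | hb'
          · exact absurd rfl hab
          · exact hcon b hb'
        · rcases Finset.mem_insert.1 hb with rfl | hb'
          · rw [dist_comm]; exact hcon a ha'
          · exact hTsep a ha' b hb' hab
      have := hTmax _ hins
      rw [Finset.card_insert_of_notMem hzT] at this
      omega
    -- assignment function
    set F : X → X := fun y =>
      if h : ∃ t ∈ T, dist (p y) t ≤ 2*r then h.choose else c with hF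
    have hFspec : ∀ y ∈ S, F y ∈ T ∧ dist (p y) (F y) ≤ 2*r := by
      intro y hy
      have h : ∃ t ∈ T, dist (p y) t ≤ 2*r :=
        hnear (p y) (by rw [hS']; exact Finset.mem_image_of_mem p hy)
      rw [hF]; simp only [dif_pos h]
      exact ⟨h.choose_spec.1, h.choose_spec.2⟩
    -- fiberwise count
    have hfib := Finset.card_eq_sum_card_fiberwise (fun y hy => (hFspec y hy).1)
      (t := T) (s := S) (f := F)
    have hfibball : ∀ t ∈ T, ((S.filter (F · = t)).card : ℝ) ≤ P₀ := by
      intro t ht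
      apply hpr t _ _ _
      · intro y hy
        simp only [Finset.coe_filter, Set.mem_setOf_eq] at hy
        obtain ⟨hyS, hyF⟩ := hy
        rw [mem_closedBall, dist_comm]
        have h1 := (hFspec y hyS).2
        rw [hyF] at h1
        have h2 := (hp1 y hyS).2
        calc dist t y ≤ dist t (p y) + dist (p y) y := dist_triangle _ _ _
          _ ≤ 2*r + r := by rw [dist_comm t (p y)]; exact add_le_add h1 h2
          _ = 3 * r := by ring
      · intro a ha b hb hab
        rw [Finset.mem_filter] at ha hb
        exact hsep a ha.1 b hb.1 hab
    have hT : (T.card : ℝ) ≤ P₀ ^ (n+1) := by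
      apply ih c T _ hTsep
      intro z hz
      rw [mem_closedBall, dist_comm]
      exact hS'ball z (hTsub hz)
    calc (S.card : ℝ) = ∑ t ∈ T, ((S.filter (F · = t)).card : ℝ) := by
          rw [hfib]; push_cast; ring
      _ ≤ ∑ t ∈ T, P₀ := Finset.sum_le_sum hfibball
      _ = (T.card : ℝ) * P₀ := by rw [Finset.sum_const, nsmul_eq_mul]
      _ ≤ P₀ ^ (n+1) * P₀ := by apply mul_le_mul_of_nonneg_right hT hP0
      _ = P₀ ^ (n+1+1) := by ring

-- ### orbit displacement bound
lemma orbit_bound {X : Type*} [MetricSpace X] (h : X ≃ᵢ X) (y : X) (ε : ℝ)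
    (hy : dist y (h y) ≤ ε) : ∀ k : ℤ, dist y ((h ^ k) y) ≤ |(k:ℝ)| * ε := by
  have hε : 0 ≤ ε := le_trans dist_nonneg hy
  have hnat : ∀ n : ℕ, dist y ((h ^ (n:ℤ)) y) ≤ (n:ℝ) * ε := by
    intro n
    induction n with
    | zero => simp
    | succ n ih =>
      have hsplit : (h ^ ((n:ℤ)+1)) y = (h ^ (n:ℤ)) (h y) := by
        rw [zpow_add, zpow_one]; rfl
      have : dist y ((h ^ ((n:ℤ)+1)) y) ≤ dist y ((h ^ (n:ℤ)) y)
          + dist ((h ^ (n:ℤ)) y) ((h ^ (n:ℤ)) (h y)) := by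
        rw [hsplit]; exact dist_triangle _ _ _
      rw [(h ^ (n:ℤ)).dist_eq] at this
      push_cast
      calc dist y ((h ^ ((n:ℤ)+1)) y) ≤ (n:ℝ) * ε + ε := by
            push_cast at this ⊢
            exact le_trans this (add_le_add ih hy)
        _ = ((n:ℝ) + 1) * ε := by ring
  intro k
  rcases le_or_gt 0 k with hk | hk
  · obtain ⟨n, rfl⟩ := Int.eq_ofNat_of_zero_le hk
    calc dist y ((h ^ (n:ℤ)) y) ≤ (n:ℝ) * ε := hnat n
      _ = |((n:ℤ):ℝ)| * ε := by push_cast; rw [abs_of_nonneg (by positivity)]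
  · obtain ⟨n, rfl⟩ : ∃ n : ℕ, k = -(n:ℤ) := by
      refine ⟨k.natAbs, ?_⟩
      omega
    have key : (h ^ (n:ℤ)) ((h ^ (-(n:ℤ))) y) = y := by
      have : (h ^ (n:ℤ)) ((h ^ (-(n:ℤ))) y) = (h ^ ((n:ℤ) + -(n:ℤ))) y := by
        rw [zpow_add]; rfl
      rw [this]
      simp
    have : dist y ((h ^ (-(n:ℤ))) y) = dist ((h ^ (n:ℤ)) y) y := by
      conv_lhs => rw [← (h ^ (n:ℤ)).dist_eq]
      rw [key]
    rw [this, dist_comm]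
    calc dist y ((h ^ (n:ℤ)) y) ≤ (n:ℝ) * ε := hnat n
      _ = |((-(n:ℤ) : ℤ):ℝ)| * ε := by
        push_cast; rw [abs_neg, abs_of_nonneg (by positivity)]

-- ### packing constant is at least 2
lemma two_le_pack {X : Type*} [MetricSpace X] {σ : X → X → ℝ → X} {P₀ r₀ : ℝ}
    (hGCB : IsGCB σ) (hpack : IsPacked X P₀ r₀) (hr₀ : 0 < r₀) (x0 : X) :
    2 ≤ P₀ := by
  classical
  obtain ⟨γ, hiso, hline, hseg⟩ := hGCB.geodComplete x0 x0
  have hd : dist (γ 0) (γ (3*r₀)) = 3*r₀ := by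
    rw [hiso.dist_eq, Real.dist_eq, abs_of_nonpos (by linarith), neg_sub, sub_zero]
  have hne : γ 0 ≠ γ (3*r₀) := by
    intro h
    rw [h, dist_self] at hd
    linarith
  have := hpack (γ 0) {γ 0, γ (3*r₀)} ?_ ?_
  · rwa [Finset.card_insert_of_notMem (by simp [hne]), Finset.card_singleton] at this
  · intro z hz
    simp only [Finset.coe_insert, Set.mem_insert_iff, Finset.coe_singleton,
      Set.mem_singleton_iff] at hz
    rcases hz with rfl | rfl
    · exact mem_closedBall_self (by linarith)
    · rw [mem_closedBall, dist_comm, hd]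
  · intro a ha b hb hab
    simp only [Finset.mem_insert, Finset.mem_singleton] at ha hb
    rcases ha with rfl | rfl <;> rcases hb with rfl | rfl
    · exact absurd rfl hab
    · rw [hd]; linarith
    · rw [dist_comm, hd]; linarith
    · exact absurd rfl hab

-- ### key arithmetic inequality
lemma key_ineq {P₀ β A : ℝ} (m : ℕ) (hm : m = max 3 ⌈β⌉₊) (hP2 : 2 ≤ P₀) (hβ1 : 1 < β)
    (hBA : (1+P₀) ^ β = A) :
    P₀ ^ (m - 2) < (A-1)/2 + ((m:ℝ) - β)*(A+1)/(2*β) := by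
  set B := (1:ℝ) + P₀ with hB
  have hB3 : (3:ℝ) ≤ B := by rw [hB]; linarith
  have hBpos : (0:ℝ) < B := by linarith
  have hβpos : (0:ℝ) < β := by linarith
  have hlogB : 1 ≤ Real.log B := by
    have h3 : Real.exp 1 ≤ 3 := by have := Real.exp_one_lt_d9; linarith
    calc (1:ℝ) = Real.log (Real.exp 1) := (Real.log_exp 1).symm
      _ ≤ Real.log B := Real.log_le_log (Real.exp_pos 1) (le_trans h3 hB3)
  have hs : 1 + (β-1) * Real.log B ≤ B ^ (β-1) := by
    have := Real.add_one_le_exp ((β-1) * Real.log B)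
    rw [Real.rpow_def_of_pos hBpos, mul_comm (Real.log B) (β-1)]
    linarith
  have hAval : A = B * B ^ (β-1) := by
    rw [← hBA]
    have hbe : β = 1 + (β-1) := by ring
    calc B ^ β = B ^ (1 + (β-1)) := by rw [← hbe]
      _ = B ^ (1:ℝ) * B ^ (β-1) := Real.rpow_add hBpos 1 (β-1)
      _ = B * B ^ (β-1) := by rw [Real.rpow_one]
  rcases le_or_gt β 2 with hc | hc
  · -- small β case : m = 3
    have hmv : m = 3 := by
      rw [hm, max_eq_left]
      rw [Nat.ceil_le]
      push_cast; linarith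
    rw [hmv]
    norm_num
    -- goal : P₀ < (A-1)/2 + (3-β)*(A+1)/(2*β)
    have hAB : B * (1 + (β-1)) ≤ A := by
      rw [hAval]
      have h1 : 1 + (β-1) ≤ 1 + (β-1) * Real.log B := by nlinarith
      nlinarith
    have hAge : 3 ≤ A := by nlinarith
    have hkey2 : 2*β*P₀ < 3*A + 3 - 2*β := by nlinarith
    have heq : (A-1)/2 + (3-β)*(A+1)/(2*β) = (β*(A-1) + (3-β)*(A+1))/(2*β) := by
      field_simp
    rw [heq, lt_div_iff₀ (by positivity)]
    nlinarith [hkey2]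
  · -- large β case : m = ⌈β⌉₊
    have hceil3 : 3 ≤ ⌈β⌉₊ := by
      have : (2:ℕ) < ⌈β⌉₊ := Nat.lt_ceil.2 (by push_cast; linarith)
      omega
    have hmv : m = ⌈β⌉₊ := by rw [hm, max_eq_right hceil3]
    have hm3 : 3 ≤ m := by omega
    have hmcast : (((m-2:ℕ)):ℝ) = (m:ℝ) - 2 := by
      have : (2:ℕ) ≤ m := by omega
      push_cast [Nat.cast_sub this]
      ring
    have hmub : (m:ℝ) - 2 ≤ β - 1 := by
      have : ((⌈β⌉₊:ℕ):ℝ) < β + 1 := Nat.ceil_lt_add_one (by linarith)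
      rw [hmv]; push_cast at this ⊢; linarith
    have hP1 : (1:ℝ) ≤ P₀ := by linarith
    have h1 : (P₀:ℝ) ^ (m-2) ≤ P₀ ^ (β-1) := by
      rw [← Real.rpow_natCast P₀ (m-2), hmcast]
      exact Real.rpow_le_rpow_of_exponent_le hP1 hmub
    set u := (P₀:ℝ) ^ (β-1) with hu
    have hu2 : 2 ≤ u := by
      rw [hu]
      calc (2:ℝ) ≤ P₀ := hP2
        _ = P₀ ^ (1:ℝ) := (Real.rpow_one P₀).symm
        _ ≤ P₀ ^ (β-1) := Real.rpow_le_rpow_of_exponent_le hP1 (by linarith)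
    have hA3u : 3 * u ≤ A := by
      rw [hAval, hu]
      have hb1 : (P₀:ℝ) ^ (β-1) ≤ B ^ (β-1) :=
        Real.rpow_le_rpow (by linarith) (by rw [hB]; linarith) (by linarith)
      nlinarith [Real.rpow_nonneg (show (0:ℝ) ≤ P₀ by linarith) (β-1)]
    have hfrac : 0 ≤ ((m:ℝ) - β)*(A+1)/(2*β) := by
      have hmβ : β ≤ (m:ℝ) := by
        rw [hmv]; exact Nat.le_ceil β
      have hA1 : (0:ℝ) ≤ A + 1 := by nlinarith
      apply div_nonneg (mul_nonneg (by linarith) hA1) (by linarith)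
    calc (P₀:ℝ) ^ (m-2) ≤ u := h1
      _ < (A-1)/2 := by nlinarith
      _ ≤ (A-1)/2 + ((m:ℝ) - β)*(A+1)/(2*β) := by linarith

set_option maxHeartbeats 1000000 in
/-- **Proposition 4.6(ii)**: lower estimate for the distance between levels of generalized
Margulis domains at scales `ε₂ ≤ r₀`. -/
theorem genMargulis_lower_estimate_ii
    (P₀ r₀ δ : ℝ) (hP₀ : 0 < P₀) (hr₀ : 0 < r₀) (hδ : 0 < δ)
    (X : Type*) [MetricSpace X] [CompleteSpace X] (σ : X → X → ℝ → X)
    (hGCB : IsGCB σ) (hhyp : IsDeltaHyperbolic X δ) (hpack : IsPacked X P₀ r₀)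
    (ε₁ ε₂ : ℝ) (hε₁ : 0 < ε₁) (h₁₂ : ε₁ ≤ ε₂) (hε₂ : ε₂ ≤ r₀)
    (g : X ≃ᵢ X) (hσg : IsSigmaIsometry σ g) (hell : IsNonElliptic g)
    (hM : (genMargulisDomain g ε₁).Nonempty)
    (x : X) (hx : x ∉ genMargulisDomain g ε₂) :
    Real.log (2 / ε₁ - 1) / (2 * Real.log (1 + P₀)) * ε₂ - 1 / 2 <
      infDist x (genMargulisDomain g ε₁) := by
  classical
  by_contra hcon
  push_neg at hcon
  set A := 2/ε₁ - 1 with hA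
  set B := (1:ℝ) + P₀ with hB
  set L := infDist x (genMargulisDomain g ε₁) with hL
  set r := ε₂ / 2 with hr
  set β := Real.log A / Real.log B with hβ
  have hε₂pos : 0 < ε₂ := lt_of_lt_of_le hε₁ h₁₂
  have hP2 : 2 ≤ P₀ := two_le_pack hGCB hpack hr₀ x
  have hB3 : (3:ℝ) ≤ B := by rw [hB]; linarith
  have hBpos : (0:ℝ) < B := by linarith
  have hlogB : 1 ≤ Real.log B := by
    have h3 : Real.exp 1 ≤ 3 := by have := Real.exp_one_lt_d9; linarith
    calc (1:ℝ) = Real.log (Real.exp 1) := (Real.log_exp 1).symm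
      _ ≤ Real.log B := Real.log_le_log (Real.exp_pos 1) (le_trans h3 hB3)
  have hL0 : 0 ≤ L := infDist_nonneg
  have hrpos : 0 < r := by rw [hr]; linarith
  have hβr : L + 1/2 ≤ β * r := by
    have heq : Real.log A / (2 * Real.log B) * ε₂ = β * r := by
      rw [hβ, hr]; ring
    have hcon' : L ≤ Real.log A / (2 * Real.log B) * ε₂ - 1/2 := hcon
    linarith
  have hx' : ∀ k : ℤ, k ≠ 0 → ε₂ < dist x ((g^k) x) := by
    intro k hk
    by_contra hle
    push_neg at hle
    exact hx (Set.mem_biUnion (show k ∈ {i : ℤ | i ≠ 0} from hk)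
      (show x ∈ margulisDomain (g^k) ε₂ from hle))
  -- ε₁ < 1
  have hε₁1 : ε₁ < 1 := by
    by_contra h1
    push_neg at h1
    have hA1 : A ≤ 1 := by
      rw [hA]
      have : 2/ε₁ ≤ 2 := by rw [div_le_iff₀ hε₁]; linarith
      linarith
    have hAm1 : -1 < A := by
      rw [hA]
      have : 0 < 2/ε₁ := by positivity
      linarith
    have hlogA : Real.log A ≤ 0 := by
      rcases le_or_gt A 0 with h | h
      · rw [show A = -(-A) by ring, Real.log_neg_eq_log]
        exact Real.log_nonpos (by linarith) (by linarith)
      · exact Real.log_nonpos h.le hA1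
    have hβ0 : β ≤ 0 := div_nonpos_of_nonpos_of_nonneg hlogA (by linarith)
    nlinarith
  have hA1 : 1 < A := by
    rw [hA]
    have : 2 < 2/ε₁ := by rw [lt_div_iff₀ hε₁]; linarith
    linarith
  have hlogA : 0 < Real.log A := Real.log_pos hA1
  have hβpos : 0 < β := div_pos hlogA (by linarith)
  -- membership unfolding
  have hmem : ∀ y : X, y ∈ genMargulisDomain g ε₁ →
      ∃ i : ℤ, i ≠ 0 ∧ dist y ((g^i) y) ≤ ε₁ := by
    intro y hy
    rw [genMargulisDomain, Set.mem_iUnion₂] at hy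
    obtain ⟨i, hi, hyi⟩ := hy
    exact ⟨i, hi, hyi⟩
  -- trivial lower bound
  have htriv : (ε₂ - ε₁)/2 ≤ L := by
    by_contra hlt
    push_neg at hlt
    obtain ⟨y, hyM, hyd⟩ := (infDist_lt_iff hM).1 hlt
    obtain ⟨i, hi0, hyi⟩ := hmem y hyM
    have hxk : ε₂ < dist x ((g^i) x) := hx' i hi0
    have htr : dist x ((g^i) x) ≤ dist x y + dist y ((g^i) y) + dist ((g^i) y) ((g^i) x) :=
      dist_triangle4 _ _ _ _
    rw [(g^i).dist_eq, dist_comm y x] at htr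
    linarith
  have hβ1 : 1 < β := by
    by_contra hb
    push_neg at hb
    have h1 : β * r ≤ r := by nlinarith
    have h2 : (ε₂ - ε₁)/2 = r - ε₁/2 := by rw [hr]; ring
    linarith
  have hBA : B ^ β = A := by
    have : β = Real.logb B A := rfl
    rw [this]
    exact Real.rpow_logb hBpos (by linarith) (by linarith)
  set m := max 3 ⌈β⌉₊ with hm
  have hm3 : 3 ≤ m := le_max_left _ _
  have hmβ : β ≤ (m:ℝ) := by
    calc β ≤ (⌈β⌉₊:ℝ) := Nat.le_ceil β
      _ ≤ (m:ℝ) := by exact_mod_cast le_max_right 3 ⌈β⌉₊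
  have hkey := key_ineq m hm hP2 hβ1 hBA
  set Δ := (A-1)/2 + ((m:ℝ)-β)*(A+1)/(2*β) - P₀ ^ (m-2) with hΔ
  have hΔpos : 0 < Δ := by rw [hΔ]; linarith
  have hA1pos : (0:ℝ) < A + 1 := by linarith
  set η := min (Δ/(2*(A+1))) (1/4) with hη
  have hηpos : 0 < η := lt_min (by positivity) (by norm_num)
  have hη4 : η ≤ 1/4 := min_le_right _ _
  obtain ⟨y, hyM, hyd⟩ := (infDist_lt_iff hM).1 (show L < L + η by linarith)
  obtain ⟨i, hi0, hyi⟩ := hmem y hyM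
  set D := dist x y with hD
  have hDL : D < L + η := hyd
  have hmr : β * r ≤ (m:ℝ) * r := mul_le_mul_of_nonneg_right hmβ hrpos.le
  have hmrD : 0 < (m:ℝ)*r - D := by linarith
  set K := ⌊((m:ℝ)*r - D)/ε₁⌋₊ with hK
  have hK1 : (K:ℝ)*ε₁ ≤ (m:ℝ)*r - D := by
    have hfl := Nat.floor_le (show 0 ≤ ((m:ℝ)*r - D)/ε₁ by positivity)
    calc (K:ℝ)*ε₁ ≤ (((m:ℝ)*r - D)/ε₁)*ε₁ := mul_le_mul_of_nonneg_right hfl hε₁.le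
      _ = (m:ℝ)*r - D := by field_simp
  have hK2 : 2*((((m:ℝ)*r - D))/ε₁) - 1 < 2*(K:ℝ) + 1 := by
    have := Nat.sub_one_lt_floor (((m:ℝ)*r - D)/ε₁)
    linarith
  -- the orbit points
  set p : ℕ → X := fun j => ((g^i) ^ j) x with hp
  have hptoz : ∀ j : ℕ, p j = ((g^i) ^ (j:ℤ)) x := by
    intro j; rw [hp]; simp [zpow_natCast]
  have hdistz : ∀ (z : X) (a b : ℤ),
      dist (((g^i)^a) z) (((g^i)^b) z) = dist z (((g^i)^(b-a)) z) := by
    intro z a b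
    have h1 : ((g^i)^b) z = ((g^i)^a) (((g^i)^(b-a)) z) := by
      have h2 : (g^i)^a * (g^i)^(b-a) = (g^i)^b := by
        rw [← zpow_add]; ring_nf
      rw [← h2]; rfl
    rw [h1, ((g^i)^a).dist_eq]
  have hsep : ∀ j j' : ℕ, j ≠ j' → ε₂ < dist (p j) (p j') := by
    intro j j' hjj
    rw [hptoz j, hptoz j', hdistz x (j:ℤ) (j':ℤ)]
    have hne : ((j':ℤ) - j) ≠ 0 := by
      intro h
      apply hjj
      omega
    have : (g^i)^((j':ℤ) - j) = g^(i*((j':ℤ) - j)) := (zpow_mul g i _).symm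
    rw [this]
    exact hx' _ (mul_ne_zero hi0 hne)
  set S : Finset X := (Finset.range (2*K+1)).image p with hS
  have hScard : S.card = 2*K+1 := by
    rw [hS]
    rw [Finset.card_image_of_injOn]
    · exact Finset.card_range _
    · intro a _ b _ hab
      by_contra hne
      have := hsep a b hne
      rw [hab, dist_self] at this
      linarith
  set q : X := ((g^i) ^ K) y with hq
  have hSball : ↑S ⊆ closedBall q ((m:ℝ)*r) := by
    intro z hz
    rw [hS] at hz
    simp only [Finset.coe_image, Set.mem_image, Finset.mem_coe, Finset.mem_range] at hz
    obtain ⟨j, hj, rfl⟩ := hz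
    rw [mem_closedBall]
    have hyorb : dist (((g^i)^j) y) q ≤ (K:ℝ)*ε₁ := by
      rw [hq]
      have e1 : ((g^i)^j : X ≃ᵢ X) = (g^i)^(j:ℤ) := by simp [zpow_natCast]
      have e2 : ((g^i)^K : X ≃ᵢ X) = (g^i)^(K:ℤ) := by simp [zpow_natCast]
      rw [e1, e2, hdistz y (j:ℤ) (K:ℤ)]
      calc dist y (((g^i)^((K:ℤ)-j)) y) ≤ |(((K:ℤ)-j : ℤ):ℝ)| * ε₁ :=
            orbit_bound (g^i) y ε₁ hyi _
        _ ≤ (K:ℝ)*ε₁ := by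
            apply mul_le_mul_of_nonneg_right _ hε₁.le
            have hj0 : (0:ℝ) ≤ (j:ℝ) := by positivity
            have hj2 : (j:ℝ) ≤ 2*(K:ℝ) := by
              have : j ≤ 2*K := by omega
              exact_mod_cast this
            rw [abs_le]
            push_cast
            constructor <;> linarith
    have hxy : dist (p j) (((g^i)^j) y) = D := by
      rw [hp]
      simp only
      rw [((g^i)^j).dist_eq, hD]
    calc dist (p j) q ≤ dist (p j) (((g^i)^j) y) + dist (((g^i)^j) y) q := dist_triangle _ _ _
      _ ≤ D + (K:ℝ)*ε₁ := by rw [hxy]; linarith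
      _ ≤ (m:ℝ)*r := by linarith
  -- apply the counting lemma
  have hrr₀ : r ≤ r₀ := by rw [hr]; linarith
  have hcount := counting hGCB hpack (by linarith) hrpos hrr₀ (m-3) q S ?_ ?_
  · -- final numeric contradiction
    have hexp : (m-3)+1 = m-2 := by omega
    rw [hexp, hScard] at hcount
    have h5 : 2*(K:ℝ) + 1 ≤ P₀ ^ (m-2) := by
      calc 2*(K:ℝ) + 1 = ((2*K+1 : ℕ):ℝ) := by push_cast; ring
        _ ≤ P₀ ^ (m-2) := hcount
    have hc1 : A + 1 = 2/ε₁ := by rw [hA]; ring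
    have e1 : 2*((((m:ℝ)*r - D))/ε₁) = (A+1)*((m:ℝ)*r - D) := by
      rw [hc1]; field_simp
    have h2 : ((m:ℝ)-β)*r + 1/2 - η ≤ (m:ℝ)*r - D := by linarith
    have hr2β : 1/(2*β) ≤ r := by
      rw [div_le_iff₀ (by positivity)]
      nlinarith
    have h3 : ((m:ℝ)-β)*(1/(2*β)) ≤ ((m:ℝ)-β)*r :=
      mul_le_mul_of_nonneg_left hr2β (by linarith)
    have h4 : (A+1)*η ≤ Δ/2 := by
      have hη1 : η ≤ Δ/(2*(A+1)) := min_le_left _ _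
      calc (A+1)*η ≤ (A+1)*(Δ/(2*(A+1))) := mul_le_mul_of_nonneg_left hη1 hA1pos.le
        _ = Δ/2 := by field_simp
    have h6 : (A+1)*(((m:ℝ)-β)*(1/(2*β)) + 1/2 - η) ≤ (A+1)*((m:ℝ)*r - D) :=
      mul_le_mul_of_nonneg_left (by linarith) hA1pos.le
    have h7 : (A+1)*(((m:ℝ)-β)*(1/(2*β)) + 1/2 - η)
        = ((m:ℝ)-β)*(A+1)/(2*β) + (A+1)/2 - (A+1)*η := by
      field_simp
    rw [h7] at h6
    linarith [hK2, e1, h5, hΔpos]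
  · -- ball radius
    have : (((m-3:ℕ):ℝ)+3) = (m:ℝ) := by
      have h3m : (3:ℕ) ≤ m := hm3
      push_cast [Nat.cast_sub h3m]
      ring
    rw [this]
    exact hSball
  · -- separation
    intro a ha b hb hab
    rw [hS, Finset.mem_image] at ha hb
    obtain ⟨j, hj, rfl⟩ := ha
    obtain ⟨j', hj', rfl⟩ := hb
    have hne : j ≠ j' := by rintro rfl; exact hab rfl
    have := hsep j j' hne
    rw [hr]
    linarith
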